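/- Let V ⊆ ℂⁿ be a complex linear subspace with dim V = m, and let k be the rank of the standard bilinear form ⟨·,·⟩ restricted to V. Then 2m − k ≤ n, and there exists g ∈ O(n,ℂ) such that g(V) = span_ℂ{e₁, …, e_k, e_{k+1} + i·e_{m+1}, …, e_m + i·e_{2m−k}}, where e₁, …, e_n is the standard basis of ℂⁿ and i = √−1 (when k = m this span is just span{e₁, …, e_m}). -/

import Mathlib

noncomputable section

/-- The standard symmetric bilinear form `⟨x,y⟩ = ∑ₛ xₛ yₛ` on `ℂⁿ`. -/
def sbilin {n : ℕ} (x y : Fin n → ℂ) : ℂ := ∑ s, x s * y s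

/-- The annihilator `V^⊥ = {w : ⟨v,w⟩ = 0 ∀ v ∈ V}` with respect to `sbilin`. -/
def perp (n : ℕ) (V : Submodule ℂ (Fin n → ℂ)) : Submodule ℂ (Fin n → ℂ) where
  carrier := {w | ∀ v ∈ V, sbilin v w = 0}
  zero_mem' := by intro v hv; simp [sbilin]
  add_mem' := by
    intro a b ha hb v hv
    have h1 := ha v hv
    have h2 := hb v hv
    simp only [sbilin, Pi.add_apply, mul_add, Finset.sum_add_distrib] at *
    simp [h1, h2]
  smul_mem' := by
    intro c a ha v hv
    have h := ha v hv
    simp only [sbilin, Pi.smul_apply, smul_eq_mul] at *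
    calc ∑ s, v s * (c * a s) = c * ∑ s, v s * a s := by
          rw [Finset.mul_sum]; exact Finset.sum_congr rfl fun s _ => by ring
      _ = 0 := by rw [h, mul_zero]

/-- The `j`-th standard basis vector of `ℂⁿ` (1-indexed: `stdVec n 1, …, stdVec n n`). -/
def stdVec (n : ℕ) (j : ℕ) : Fin n → ℂ := fun s => if (s : ℕ) + 1 = j then 1 else 0

namespace Aux
open Module Set Submodule

variable {n : ℕ}

lemma sbilin_comm (x y : Fin n → ℂ) : sbilin x y = sbilin y x := by
  simp [sbilin, mul_comm]

lemma sbilin_add_left (x y z : Fin n → ℂ) :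
    sbilin (x + y) z = sbilin x z + sbilin y z := by
  simp [sbilin, add_mul, Finset.sum_add_distrib]

lemma sbilin_add_right (x y z : Fin n → ℂ) :
    sbilin x (y + z) = sbilin x y + sbilin x z := by
  simp [sbilin, mul_add, Finset.sum_add_distrib]

lemma sbilin_sub_left (x y z : Fin n → ℂ) :
    sbilin (x - y) z = sbilin x z - sbilin y z := by
  simp [sbilin, sub_mul, Finset.sum_sub_distrib]

lemma sbilin_sub_right (x y z : Fin n → ℂ) :
    sbilin x (y - z) = sbilin x y - sbilin x z := by
  simp [sbilin, mul_sub, Finset.sum_sub_distrib]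

lemma sbilin_smul_left (c : ℂ) (x y : Fin n → ℂ) :
    sbilin (c • x) y = c * sbilin x y := by
  simp [sbilin, Finset.mul_sum, mul_assoc]

lemma sbilin_smul_right (c : ℂ) (x y : Fin n → ℂ) :
    sbilin x (c • y) = c * sbilin x y := by
  simp [sbilin, Finset.mul_sum]; ring_nf
  exact Finset.sum_congr rfl fun s _ => by ring

lemma sbilin_sum_left {ι : Type*} (s : Finset ι) (f : ι → Fin n → ℂ) (y : Fin n → ℂ) :
    sbilin (∑ i ∈ s, f i) y = ∑ i ∈ s, sbilin (f i) y := by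
  simp only [sbilin, Finset.sum_apply, Finset.sum_mul]
  rw [Finset.sum_comm]

lemma sbilin_sum_right {ι : Type*} (s : Finset ι) (f : ι → Fin n → ℂ) (y : Fin n → ℂ) :
    sbilin y (∑ i ∈ s, f i) = ∑ i ∈ s, sbilin y (f i) := by
  simp only [sbilin, Finset.sum_apply, Finset.mul_sum]
  rw [Finset.sum_comm]

/-- `sbilin` as a bilinear form. -/
def Bn (n : ℕ) : LinearMap.BilinForm ℂ (Fin n → ℂ) :=
  LinearMap.mk₂ ℂ sbilin sbilin_add_left sbilin_smul_left sbilin_add_right sbilin_smul_right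

@[simp] lemma Bn_apply (x y : Fin n → ℂ) : Bn n x y = sbilin x y := rfl

lemma sbilin_single (i j : Fin n) :
    sbilin (Pi.single i (1:ℂ)) (Pi.single j 1) = if i = j then 1 else 0 := by
  classical
  simp only [sbilin, Pi.single_apply, ite_mul, one_mul, zero_mul, Finset.sum_ite_eq',
    Finset.mem_univ, if_true]

lemma sbilin_nondeg {x : Fin n → ℂ} (h : ∀ v, sbilin v x = 0) : x = 0 := by
  classical
  funext s
  have := h (Pi.single s 1)
  simpa [sbilin, Pi.single_apply] using this


/-- An orthonormal family w.r.t. `sbilin`. -/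
def ON {ι : Type*} [DecidableEq ι] (v : ι → Fin n → ℂ) : Prop :=
  ∀ i j, sbilin (v i) (v j) = if i = j then 1 else 0

lemma ON.linearIndependent {ι : Type*} [Fintype ι] [DecidableEq ι] {v : ι → Fin n → ℂ}
    (h : ON v) : LinearIndependent ℂ v := by
  rw [Fintype.linearIndependent_iff]
  intro c hc j
  have : sbilin (v j) (∑ i, c i • v i) = c j := by
    rw [sbilin_sum_right]
    simp only [sbilin_smul_right, h j]
    simp [Finset.mul_sum, mul_ite]
  rw [hc] at this
  simpa [sbilin] using this.symm

lemma forall_mem_span {ι : Type*} {f : ι → Fin n → ℂ} {x : Fin n → ℂ}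
    (h : ∀ i, sbilin (f i) x = 0) :
    ∀ v ∈ Submodule.span ℂ (Set.range f), sbilin v x = 0 := by
  intro v hv
  induction hv using Submodule.span_induction with
  | mem v hv => obtain ⟨i, rfl⟩ := hv; exact h i
  | zero => simp [sbilin]
  | add a b _ _ ha hb => rw [sbilin_add_left, ha, hb, add_zero]
  | smul c a _ ha => rw [sbilin_smul_left, ha, mul_zero]

lemma forall_mem_of_basis {S : Submodule ℂ (Fin n → ℂ)} {ι : Type*} [Fintype ι]
    (b : Basis ι ℂ ↥S) {x : Fin n → ℂ} (h : ∀ i, sbilin ↑(b i) x = 0) :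
    ∀ v ∈ S, sbilin v x = 0 := by
  intro v hv
  have hrepr : (⟨v, hv⟩ : S) = ∑ i, b.repr ⟨v, hv⟩ i • b i := (b.sum_repr _).symm
  have hv2 : v = ∑ i, b.repr ⟨v, hv⟩ i • ((b i : Fin n → ℂ)) := by
    have := congrArg (Subtype.val) hrepr
    simpa only [Submodule.coe_sum, Submodule.coe_smul] using this
  rw [hv2, sbilin_sum_left]
  simp [sbilin_smul_left, h]

lemma riesz (f : (Fin n → ℂ) →ₗ[ℂ] ℂ) : ∃ z, ∀ x, sbilin x z = f x := by
  have hinj : Function.Injective (Bn n) := by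
    rw [← LinearMap.ker_eq_bot, Submodule.eq_bot_iff]
    intro x hx
    rw [LinearMap.mem_ker] at hx
    refine sbilin_nondeg (fun v => ?_)
    rw [sbilin_comm]
    have := congrArg (fun φ => φ v) hx
    simpa using this
  have hsurj : Function.Surjective (Bn n : (Fin n → ℂ) →ₗ[ℂ] Module.Dual ℂ (Fin n → ℂ)) := by
    rw [← LinearMap.injective_iff_surjective_of_finrank_eq_finrank
      (Subspace.dual_finrank_eq (K := ℂ) (V := Fin n → ℂ)).symm]
    exact hinj
  obtain ⟨z, hz⟩ := hsurj f
  exact ⟨z, fun x => by rw [sbilin_comm]; exact congrArg (fun φ => φ x) hz⟩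

lemma exists_dual {ι : Type*} [Fintype ι] [DecidableEq ι] {y : ι → Fin n → ℂ}
    (hy : LinearIndependent ℂ y) (j : ι) :
    ∃ z, ∀ i, sbilin (y i) z = if i = j then 1 else 0 := by
  let bS : Basis ι ℂ ↥(Submodule.span ℂ (Set.range y)) := Basis.span hy
  obtain ⟨f, hf⟩ := LinearMap.exists_extend (bS.coord j)
  obtain ⟨z, hz⟩ := riesz f
  refine ⟨z, fun i => ?_⟩
  have h1 : y i = ↑(bS i) := (congrArg Subtype.val (Module.Basis.span_apply hy i)).symm
  rw [h1, hz]
  have : f ↑(bS i) = (bS.coord j) (bS i) := by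
    have := congrArg (fun φ => φ (bS i)) hf
    simpa using this
  rw [this]
  simp [Basis.coord_apply, Finsupp.single_apply]


lemma exists_ON_subspace (S : Submodule ℂ (Fin n → ℂ))
    (hS : ∀ x ∈ S, (∀ y ∈ S, sbilin x y = 0) → x = 0) :
    ∃ cb : Fin (Module.finrank ℂ S) → Fin n → ℂ, (∀ i, cb i ∈ S) ∧ ON cb := by
  classical
  have hsymm : ((Bn n).restrict S).IsSymm := by
    rw [LinearMap.BilinForm.isSymm_def]
    intro x y
    simp only [LinearMap.BilinForm.restrict_apply, RingHom.id_apply, Bn_apply]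
    exact sbilin_comm _ _
  obtain ⟨bo, hbo⟩ := LinearMap.BilinForm.exists_orthogonal_basis (LinearMap.BilinForm.isSymm_iff.1 hsymm)
  have hboo : ∀ i j, i ≠ j → sbilin ((bo i : Fin n → ℂ)) ↑(bo j) = 0 := by
    intro i j hij
    have := hbo hij
    simpa [LinearMap.IsOrtho] using this
  have hdiag : ∀ i, sbilin ((bo i : Fin n → ℂ)) ↑(bo i) ≠ 0 := by
    intro i hzero
    have hb0 : (bo i : Fin n → ℂ) = 0 := by
      refine hS _ (bo i).2 ?_
      refine fun y hy => ?_
      rw [sbilin_comm]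
      refine forall_mem_of_basis bo (x := ↑(bo i)) (fun j => ?_) y hy
      by_cases h : j = i
      · subst h; rwa [sbilin_comm]
      · exact hboo j i h
    exact bo.ne_zero i (Subtype.ext hb0)
  choose c hc using fun i => IsAlgClosed.exists_pow_nat_eq (k := ℂ)
    (sbilin ((bo i : Fin n → ℂ)) ↑(bo i)) (n := 2) zero_lt_two
  have hcne : ∀ i, c i ≠ 0 := by
    intro i h0
    apply hdiag i
    rw [← hc i, h0]; ring
  refine ⟨fun i => (c i)⁻¹ • ↑(bo i), fun i => S.smul_mem _ (bo i).2, fun i j => ?_⟩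
  rw [sbilin_smul_left, sbilin_smul_right]
  by_cases h : i = j
  · subst h
    rw [if_pos rfl, ← hc i]
    rw [sq, show (c i)⁻¹ * ((c i)⁻¹ * (c i * c i)) = ((c i)⁻¹ * c i) * ((c i)⁻¹ * c i) by ring,
      inv_mul_cancel₀ (hcne i), one_mul]
  · rw [if_neg h, hboo i j h, mul_zero, mul_zero]


lemma stdVec_single (i : Fin n) : stdVec n ((i : ℕ) + 1) = Pi.single i 1 := by
  funext s
  simp [stdVec, Pi.single_apply, Fin.val_eq_val, eq_comm]

lemma span_range_eq_of_unit_smul {ι : Type*} {v v' : ι → Fin n → ℂ}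
    (h : ∀ i, ∃ c : ℂ, c ≠ 0 ∧ v i = c • v' i) :
    Submodule.span ℂ (Set.range v) = Submodule.span ℂ (Set.range v') := by
  apply le_antisymm <;> rw [Submodule.span_le] <;> rintro x ⟨i, rfl⟩
  · obtain ⟨c, hc, hv⟩ := h i
    rw [hv]
    exact Submodule.smul_mem _ _ (Submodule.subset_span ⟨i, rfl⟩)
  · obtain ⟨c, hc, hv⟩ := h i
    have hv' : v' i = c⁻¹ • v i := by rw [hv, smul_smul, inv_mul_cancel₀ hc, one_smul]
    rw [hv']
    exact Submodule.smul_mem _ _ (Submodule.subset_span ⟨i, rfl⟩)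

end Aux

open Aux Module Set Submodule

/-- Normal forms of `m`-planes in `ℂⁿ` under the complex orthogonal group: if
`k` is the rank of the standard bilinear form restricted to `V`, then `2m − k ≤ n`
and some `g ∈ O(n,ℂ)` carries `V` to
`span{e₁, …, e_k, e_{k+1} + i·e_{m+1}, …, e_m + i·e_{2m−k}}`. -/
theorem stmt3 (n m k : ℕ) (V : Submodule ℂ (Fin n → ℂ))
    (hm : Module.finrank ℂ V = m)
    (hk : k = m - Module.finrank ℂ ↥(V ⊓ perp n V)) :
    2 * m ≤ n + k ∧
    ∃ g : (Fin n → ℂ) ≃ₗ[ℂ] (Fin n → ℂ),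
      (∀ x y : Fin n → ℂ, sbilin (g x) (g y) = sbilin x y) ∧
      V.map (g : (Fin n → ℂ) →ₗ[ℂ] (Fin n → ℂ)) =
        Submodule.span ℂ (Set.range fun t : Fin m =>
          if (t : ℕ) + 1 ≤ k then stdVec n ((t : ℕ) + 1)
          else stdVec n ((t : ℕ) + 1) + Complex.I • stdVec n ((t : ℕ) + 1 + m - k)) := by
  classical
  set W : Submodule ℂ (Fin n → ℂ) := V ⊓ perp n V with hWdef
  set r : ℕ := Module.finrank ℂ W with hrdef
  have hrm : r ≤ m := by
    rw [hrdef, ← hm]; exact Submodule.finrank_mono inf_le_left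
  have hkr : k + r = m := by omega
  -- orthogonal basis of V
  have hsymmV : ((Bn n).restrict V).IsSymm := by
    rw [LinearMap.BilinForm.isSymm_def]
    intro x y
    simp only [LinearMap.BilinForm.restrict_apply, RingHom.id_apply, Bn_apply]
    exact sbilin_comm _ _
  obtain ⟨bo0, hbo0⟩ := LinearMap.BilinForm.exists_orthogonal_basis (LinearMap.BilinForm.isSymm_iff.1 hsymmV)
  set bo : Basis (Fin m) ℂ ↥V := bo0.reindex (finCongr hm) with hbodef
  have hboo : ∀ i j : Fin m, i ≠ j → sbilin ((bo i : Fin n → ℂ)) ↑(bo j) = 0 := by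
    intro i j hij
    have hne : (finCongr hm).symm i ≠ (finCongr hm).symm j := by
      intro hcon; exact hij (by simpa using congrArg (finCongr hm) hcon)
    have h2 := hbo0 hne
    simpa [hbodef, Module.Basis.reindex_apply, LinearMap.IsOrtho] using h2
  set I : Finset (Fin m) :=
    Finset.univ.filter (fun i => sbilin ((bo i : Fin n → ℂ)) ↑(bo i) = 0) with hIdef
  have hIdiag : ∀ i ∈ I, sbilin ((bo i : Fin n → ℂ)) ↑(bo i) = 0 := by
    intro i hi; simpa [hIdef] using hi
  have hIcdiag : ∀ i ∈ Iᶜ, sbilin ((bo i : Fin n → ℂ)) ↑(bo i) ≠ 0 := by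
    intro i hi; simpa [hIdef] using hi
  -- W is spanned by the isotropic basis vectors
  have hWspan : W = Submodule.map V.subtype (Submodule.span ℂ (bo '' ↑I)) := by
    apply le_antisymm
    · rintro x hx
      obtain ⟨hxV, hxP⟩ := Submodule.mem_inf.mp hx
      refine ⟨⟨x, hxV⟩, ?_, rfl⟩
      have hx2 : x = ∑ j, bo.repr ⟨x, hxV⟩ j • ((bo j : Fin n → ℂ)) := by
        have := congrArg Subtype.val (bo.sum_repr ⟨x, hxV⟩)
        simpa only [Submodule.coe_sum, Submodule.coe_smul] using this.symm
      have hzero : ∀ i ∉ I, bo.repr ⟨x, hxV⟩ i = 0 := by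
        intro i hiI
        have hdne : sbilin ((bo i : Fin n → ℂ)) ↑(bo i) ≠ 0 :=
          hIcdiag i (Finset.mem_compl.mpr hiI)
        have h1 : sbilin ((bo i : Fin n → ℂ)) x = 0 := hxP _ (bo i).2
        have h2 : sbilin ((bo i : Fin n → ℂ)) x
            = bo.repr ⟨x, hxV⟩ i * sbilin ((bo i : Fin n → ℂ)) ↑(bo i) := by
          conv_lhs => rw [hx2]
          rw [sbilin_sum_right, Finset.sum_eq_single i]
          · rw [sbilin_smul_right]
          · intro j _ hji
            rw [sbilin_smul_right, hboo i j (Ne.symm hji), mul_zero]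
          · intro hmem; exact absurd (Finset.mem_univ i) hmem
        rw [h1] at h2
        exact ((mul_eq_zero.mp h2.symm).resolve_right hdne)
      rw [← bo.sum_repr ⟨x, hxV⟩]
      refine Submodule.sum_mem _ (fun i _ => ?_)
      by_cases hiI : i ∈ I
      · exact Submodule.smul_mem _ _
          (Submodule.subset_span (Set.mem_image_of_mem bo (Finset.mem_coe.mpr hiI)))
      · rw [hzero i hiI, zero_smul]; exact Submodule.zero_mem _
    · rintro x ⟨η, hη, rfl⟩
      rw [hWdef]
      refine Submodule.mem_inf.mpr ⟨η.2, ?_⟩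
      show ∀ v' ∈ V, sbilin v' ↑η = 0
      intro v' hv'
      induction hη using Submodule.span_induction with
      | mem ξ hξ =>
        obtain ⟨i, hiI, rfl⟩ := hξ
        refine forall_mem_of_basis bo (fun j => ?_) v' hv'
        by_cases hji : j = i
        · subst hji; exact hIdiag j (Finset.mem_coe.mp hiI)
        · exact hboo j i hji
      | zero => simp [sbilin]
      | add ξ₁ ξ₂ _ _ h1 h2 =>
        rw [Submodule.coe_add, sbilin_add_right, h1, h2, add_zero]
      | smul cc ξ _ h1 =>
        rw [Submodule.coe_smul, sbilin_smul_right, h1, mul_zero]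
  have hIr : I.card = r := by
    have h1 : Module.finrank ℂ W = Module.finrank ℂ (Submodule.span ℂ (bo '' ↑I)) := by
      rw [hWspan]; exact Submodule.finrank_map_subtype_eq _ _
    have hli : LinearIndependent ℂ (fun i : ↥(↑I : Set (Fin m)) => bo (i : Fin m)) :=
      bo.linearIndependent.comp _ Subtype.coe_injective
    have h2 := finrank_span_eq_card hli
    rw [← Set.image_eq_range] at h2
    rw [← hrdef] at h1
    rw [h1, h2]
    simp
  have hIcard : Fintype.card {x // x ∈ I} = r := by simpa using hIr
  have hIccard : Fintype.card {x // x ∈ Iᶜ} = k := by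
    simp only [Fintype.card_coe, Finset.card_compl, hIr, Fintype.card_fin]
    omega
  set eI : Fin r ≃ {x // x ∈ I} := (Fintype.equivFinOfCardEq hIcard).symm with heI
  set eIc : Fin k ≃ {x // x ∈ Iᶜ} := (Fintype.equivFinOfCardEq hIccard).symm with heIc
  set w : Fin r → Fin n → ℂ := fun j => ↑(bo ↑(eI j)) with hwdef
  set u0 : Fin k → Fin n → ℂ := fun i => ↑(bo ↑(eIc i)) with hu0def
  have hww : ∀ i j, sbilin (w i) (w j) = 0 := by
    intro i j
    by_cases hij : i = j
    · subst hij; exact hIdiag _ (eI i).2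
    · exact hboo _ _ (fun hcon => hij (eI.injective (Subtype.ext hcon)))
  have hu0w : ∀ i j, sbilin (u0 i) (w j) = 0 := by
    intro i j
    refine hboo _ _ (fun hcon => ?_)
    have h1 : (↑(eIc i) : Fin m) ∈ Iᶜ := (eIc i).2
    have h2 : (↑(eI j) : Fin m) ∈ I := (eI j).2
    rw [hcon] at h1
    exact (Finset.mem_compl.mp h1) h2
  have hd0 : ∀ i, sbilin (u0 i) (u0 i) ≠ 0 := fun i => hIcdiag _ (eIc i).2
  choose c hc using fun i => IsAlgClosed.exists_pow_nat_eq (k := ℂ)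
    (sbilin (u0 i) (u0 i)) (n := 2) zero_lt_two
  have hcne : ∀ i, c i ≠ 0 := by
    intro i h0
    apply hd0 i; rw [← hc i, h0]; ring
  set u : Fin k → Fin n → ℂ := fun i => (c i)⁻¹ • u0 i with hudef
  have huu : ∀ i j, sbilin (u i) (u j) = if i = j then 1 else 0 := by
    intro i j
    rw [hudef]
    simp only [sbilin_smul_left, sbilin_smul_right]
    by_cases hij : i = j
    · subst hij
      rw [if_pos rfl, ← hc i, sq,
        show (c i)⁻¹ * ((c i)⁻¹ * (c i * c i)) = ((c i)⁻¹ * c i) * ((c i)⁻¹ * c i) by ring,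
        inv_mul_cancel₀ (hcne i), one_mul]
    · rw [if_neg hij, hboo _ _ (fun hcon => hij (eIc.injective (Subtype.ext hcon))),
        mul_zero, mul_zero]
  have huw : ∀ i j, sbilin (u i) (w j) = 0 := by
    intro i j; rw [hudef]; simp only [sbilin_smul_left, hu0w, mul_zero]
  -- V is spanned by u and w
  set y : Fin k ⊕ Fin r → Fin n → ℂ := Sum.elim u w with hydef
  have hVy : Submodule.span ℂ (Set.range y) = V := by
    have hstep1 : Submodule.span ℂ (Set.range y)
        = Submodule.span ℂ (Set.range (Sum.elim u0 w)) := by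
      refine span_range_eq_of_unit_smul (fun t => ?_)
      cases t with
      | inl i => exact ⟨(c i)⁻¹, inv_ne_zero (hcne i), rfl⟩
      | inr j => exact ⟨1, one_ne_zero, (one_smul _ _).symm⟩
    have hrange : Set.range (Sum.elim u0 w)
        = Set.range (fun i : Fin m => ((bo i : Fin n → ℂ))) := by
      rw [Set.Sum.elim_range]
      have hru0 : Set.range u0 = (fun i : Fin m => ((bo i : Fin n → ℂ))) '' ↑(Iᶜ) := by
        rw [hu0def]
        rw [show (fun i => ((bo ↑(eIc i) : Fin n → ℂ)))
          = (fun i : Fin m => ((bo i : Fin n → ℂ))) ∘ (fun i => ↑(eIc i)) from rfl]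
        rw [Set.range_comp]
        rw [show (fun i : Fin k => (↑(eIc i) : Fin m)) = Subtype.val ∘ eIc from rfl]
        rw [Set.range_comp, Equiv.range_eq_univ, Set.image_univ, Subtype.range_coe_subtype]
        ext x
        simp
      have hrw : Set.range w = (fun i : Fin m => ((bo i : Fin n → ℂ))) '' ↑I := by
        rw [hwdef]
        rw [show (fun j => ((bo ↑(eI j) : Fin n → ℂ)))
          = (fun i : Fin m => ((bo i : Fin n → ℂ))) ∘ (fun j => ↑(eI j)) from rfl]
        rw [Set.range_comp]
        rw [show (fun j : Fin r => (↑(eI j) : Fin m)) = Subtype.val ∘ eI from rfl]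
        rw [Set.range_comp, Equiv.range_eq_univ, Set.image_univ, Subtype.range_coe_subtype]
        ext x
        simp
      rw [hru0, hrw, ← Set.image_union]
      rw [Finset.coe_compl, compl_union_self, Set.image_univ]
    rw [hstep1, hrange]
    calc Submodule.span ℂ (Set.range (fun i : Fin m => ((bo i : Fin n → ℂ))))
        = Submodule.map V.subtype (Submodule.span ℂ (Set.range bo)) := by
          rw [Submodule.map_span, ← Set.range_comp]; rfl
      _ = Submodule.map V.subtype ⊤ := by rw [bo.span_eq]
      _ = V := Submodule.map_subtype_top V
  have hyli : LinearIndependent ℂ y := by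
    rw [linearIndependent_iff_card_eq_finrank_span, Set.finrank, hVy]
    simp [hm, hkr]
  -- dual isotropic vectors
  choose z' hz' using fun j => exists_dual hyli (Sum.inr j)
  have hwz' : ∀ i j, sbilin (w i) (z' j) = if i = j then 1 else 0 := by
    intro i j
    have := hz' j (Sum.inr i)
    simpa [hydef] using this
  have huz' : ∀ i j, sbilin (u i) (z' j) = 0 := by
    intro i j
    have := hz' j (Sum.inl i)
    simpa [hydef] using this
  have hGsymm : ∀ i j, sbilin (z' i) (z' j) = sbilin (z' j) (z' i) :=
    fun i j => sbilin_comm _ _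
  set z : Fin r → Fin n → ℂ :=
    fun j => z' j - ∑ s, (sbilin (z' j) (z' s) / 2) • w s with hzdef
  have hwz : ∀ i j, sbilin (w i) (z j) = if i = j then 1 else 0 := by
    intro i j
    rw [hzdef]
    simp only [sbilin_sub_right, sbilin_sum_right, sbilin_smul_right, hww, mul_zero,
      Finset.sum_const_zero, sub_zero, hwz']
  have huz : ∀ i j, sbilin (u i) (z j) = 0 := by
    intro i j
    rw [hzdef]
    simp only [sbilin_sub_right, sbilin_sum_right, sbilin_smul_right, huw, mul_zero,
      Finset.sum_const_zero, sub_zero, huz']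
  have hzw : ∀ i j, sbilin (z i) (w j) = if i = j then 1 else 0 := by
    intro i j
    rw [sbilin_comm, hwz]
    simp only [eq_comm]
  have hz'w : ∀ a s, sbilin (z' a) (w s) = if s = a then 1 else 0 := by
    intro a s; rw [sbilin_comm]; exact hwz' s a
  have hzz : ∀ i j, sbilin (z i) (z j) = 0 := by
    intro i j
    rw [hzdef]
    simp only [sbilin_sub_left, sbilin_sub_right, sbilin_sum_left, sbilin_sum_right,
      sbilin_smul_left, sbilin_smul_right, hww, mul_zero, Finset.sum_const_zero, hwz', hz'w,
      mul_ite, mul_one, Finset.sum_ite_eq', Finset.mem_univ, if_true, sub_zero]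
    linear_combination (1/2 : ℂ) * hGsymm i j
  -- hyperbolic rotation to orthonormal pairs
  obtain ⟨s2, hs2⟩ := IsAlgClosed.exists_pow_nat_eq (k := ℂ) 2 (n := 2) zero_lt_two
  have hs2ne : s2 ≠ 0 := by
    intro h0
    rw [h0] at hs2; norm_num at hs2
  set a : Fin r → Fin n → ℂ := fun j => s2⁻¹ • (w j + z j) with hadef
  set b : Fin r → Fin n → ℂ := fun j => (Complex.I * s2)⁻¹ • (w j - z j) with hbdef
  have haa : ∀ i j, sbilin (a i) (a j) = if i = j then 1 else 0 := by
    intro i j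
    rw [hadef]
    simp only [sbilin_smul_left, sbilin_smul_right, sbilin_add_left, sbilin_add_right,
      hww, hwz, hzw, hzz]
    by_cases hij : i = j
    · subst hij
      simp only [if_pos rfl, if_true]
      field_simp
      linear_combination -hs2
    · simp [hij]
  have hbb : ∀ i j, sbilin (b i) (b j) = if i = j then 1 else 0 := by
    intro i j
    rw [hbdef]
    simp only [sbilin_smul_left, sbilin_smul_right, sbilin_sub_left, sbilin_sub_right,
      hww, hwz, hzw, hzz]
    by_cases hij : i = j
    · subst hij
      simp only [if_pos rfl, if_true]
      have hIne := Complex.I_ne_zero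
      field_simp
      linear_combination hs2 + (-(s2 ^ 2)) * Complex.I_sq
    · simp [hij]
  have hab : ∀ i j, sbilin (a i) (b j) = 0 := by
    intro i j
    rw [hadef, hbdef]
    simp only [sbilin_smul_left, sbilin_smul_right, sbilin_add_left, sbilin_sub_right,
      hww, hwz, hzw, hzz]
    by_cases hij : i = j
    · subst hij; simp
    · simp [hij]
  have hua : ∀ i j, sbilin (u i) (a j) = 0 := by
    intro i j
    rw [hadef]
    simp only [sbilin_smul_right, sbilin_add_right, huw, huz, add_zero, mul_zero]
  have hub : ∀ i j, sbilin (u i) (b j) = 0 := by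
    intro i j
    rw [hbdef]
    simp only [sbilin_smul_right, sbilin_sub_right, huw, huz, sub_zero, mul_zero]
  have hwab : ∀ j, w j = s2⁻¹ • a j + (s2⁻¹ * Complex.I) • b j := by
    intro j
    rw [hadef, hbdef]
    simp only [smul_smul]
    have h1 : s2⁻¹ * s2⁻¹ = 2⁻¹ := by
      field_simp
      linear_combination -hs2
    have h2 : s2⁻¹ * Complex.I * (Complex.I * s2)⁻¹ = 2⁻¹ := by
      rw [mul_inv]
      field_simp
      linear_combination -hs2
    rw [h1, h2, ← smul_add, add_add_sub_cancel, ← two_smul ℂ, smul_smul]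
    norm_num
  -- the orthonormal family spanning Y
  set h : Fin k ⊕ (Fin r ⊕ Fin r) → Fin n → ℂ := Sum.elim u (Sum.elim a b) with hhdef
  have hONh : ON h := by
    rintro (i | j | j) (i' | j' | j') <;>
      simp only [hhdef, Sum.elim_inl, Sum.elim_inr, Sum.inl.injEq, Sum.inr.injEq]
    · exact huu i i'
    · simp [hua i j']
    · simp [hub i j']
    · simp [sbilin_comm (a j) (u i'), hua i' j]
    · simpa using haa j j'
    · simp [hab j j']
    · simp [sbilin_comm (b j) (u i'), hub i' j]
    · simp [sbilin_comm (b j) (a j'), hab j' j]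
    · simpa using hbb j j'
  have hONh' : ∀ i j, sbilin (h i) (h j) = if i = j then 1 else 0 := hONh
  set Y : Submodule ℂ (Fin n → ℂ) := Submodule.span ℂ (Set.range h) with hYdef
  set Z : Submodule ℂ (Fin n → ℂ) := perp n Y with hZdef
  have hYmem : ∀ t, h t ∈ Y := fun t => Submodule.subset_span (Set.mem_range_self t)
  set P : (Fin n → ℂ) → (Fin n → ℂ) := fun v => ∑ t, sbilin v (h t) • h t with hPdef
  have hPY : ∀ v, P v ∈ Y := by
    intro v
    exact Submodule.sum_mem _ (fun t _ => Submodule.smul_mem _ _ (hYmem t))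
  have hPZ : ∀ v', v' - P v' ∈ Z := by
    intro v'
    show ∀ yy ∈ Y, sbilin yy (v' - P v') = 0
    refine forall_mem_span (fun t => ?_)
    rw [hPdef]
    rw [sbilin_sub_right, sbilin_sum_right]
    simp only [sbilin_smul_right, hONh', mul_ite, mul_one, mul_zero, Finset.sum_ite_eq,
      Finset.sum_ite_eq', Finset.mem_univ, if_true]
    rw [sbilin_comm, sub_self]
  have hYZbot : Y ⊓ Z = ⊥ := by
    rw [eq_bot_iff]
    rintro x hx
    obtain ⟨hxY, hxZ⟩ := Submodule.mem_inf.mp hx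
    rw [hYdef] at hxY
    obtain ⟨cc, hcc⟩ := (mem_span_range_iff_exists_fun ℂ).mp hxY
    have hcz : ∀ t, cc t = 0 := by
      intro t
      have h0 : sbilin (h t) x = 0 := hxZ (h t) (hYmem t)
      rw [← hcc, sbilin_sum_right] at h0
      simpa [sbilin_smul_right, hONh', mul_ite, Finset.sum_ite_eq, Finset.sum_ite_eq'] using h0
    rw [← hcc]
    simp [hcz, Submodule.mem_bot]
  have hYZtop : Y ⊔ Z = ⊤ := by
    rw [eq_top_iff]
    rintro x -
    rw [show x = P x + (x - P x) by abel]
    exact Submodule.add_mem _ (Submodule.mem_sup_left (hPY x))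
      (Submodule.mem_sup_right (hPZ x))
  have hYrank : Module.finrank ℂ Y = k + (r + r) := by
    rw [hYdef, finrank_span_eq_card hONh.linearIndependent]
    simp
  have hdim : k + (r + r) + Module.finrank ℂ Z = n := by
    have h1 := Submodule.finrank_sup_add_finrank_inf_eq Y Z
    rw [hYZtop, hYZbot, hYrank] at h1
    simp only [finrank_top, finrank_bot, add_zero] at h1
    rw [← h1]
    exact Module.finrank_fin_fun ℂ
  refine ⟨by omega, ?_⟩
  -- orthonormal basis of Z
  have hZnd : ∀ x ∈ Z, (∀ y' ∈ Z, sbilin x y' = 0) → x = 0 := by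
    intro x hx hx0
    refine sbilin_nondeg (fun v' => ?_)
    have h1 : sbilin (P v') x = 0 := hx (P v') (hPY v')
    have h2 : sbilin (v' - P v') x = 0 := by rw [sbilin_comm]; exact hx0 _ (hPZ v')
    have h3 : sbilin v' x = sbilin (P v') x + sbilin (v' - P v') x := by
      rw [← sbilin_add_left]
      congr 1
      abel
    rw [h3, h1, h2, add_zero]
  set p : ℕ := Module.finrank ℂ Z with hpdef
  obtain ⟨cb, hcbZ, hcbON⟩ := exists_ON_subspace Z hZnd
  have hcbperp : ∀ (v) (_ : v ∈ Y) (j : Fin p), sbilin v (cb j) = 0 := by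
    intro v hv j
    exact hcbZ j v hv
  -- the full orthonormal family
  set F : (Fin k ⊕ Fin r) ⊕ (Fin r ⊕ Fin p) → Fin n → ℂ :=
    Sum.elim (Sum.elim u a) (Sum.elim b cb) with hFdef
  have hONF : ON F := by
    have hau : ∀ i j, sbilin (a i) (u j) = 0 := fun i j => by rw [sbilin_comm]; exact hua j i
    have hbu : ∀ i j, sbilin (b i) (u j) = 0 := fun i j => by rw [sbilin_comm]; exact hub j i
    have hba : ∀ i j, sbilin (b i) (a j) = 0 := fun i j => by rw [sbilin_comm]; exact hab j i
    have hYu : ∀ i, u i ∈ Y := fun i => hYmem (Sum.inl i)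
    have hYa : ∀ j, a j ∈ Y := fun j => hYmem (Sum.inr (Sum.inl j))
    have hYb : ∀ j, b j ∈ Y := fun j => hYmem (Sum.inr (Sum.inr j))
    rintro ((i|i)|(i|i)) ((j|j)|(j|j)) <;>
      simp only [hFdef, Sum.elim_inl, Sum.elim_inr, Sum.inl.injEq, Sum.inr.injEq]
    · exact huu i j
    · simp [hua i j]
    · simp [hub i j]
    · simp [hcbperp _ (hYu i) j]
    · simp [hau i j]
    · simpa using haa i j
    · simp [hab i j]
    · simp [hcbperp _ (hYa i) j]
    · simp [hbu i j]
    · simp [hba i j]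
    · simpa using hbb i j
    · simp [hcbperp _ (hYb i) j]
    · simp [sbilin_comm (cb i) (u j), hcbperp _ (hYu j) i]
    · simp [sbilin_comm (cb i) (a j), hcbperp _ (hYa j) i]
    · simp [sbilin_comm (cb i) (b j), hcbperp _ (hYb j) i]
    · simpa using hcbON i j
  have hn2 : (k + r) + (r + p) = n := by omega
  set e : ((Fin k ⊕ Fin r) ⊕ (Fin r ⊕ Fin p)) ≃ Fin n :=
    (Equiv.sumCongr finSumFinEquiv finSumFinEquiv).trans
      (finSumFinEquiv.trans (finCongr hn2)) with hedef
  set v : Fin n → Fin n → ℂ := F ∘ e.symm with hvdef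
  have hONv : ON v := by
    intro i j
    rw [hvdef]
    simp only [Function.comp_apply]
    rw [hONF]
    simp [e.symm.injective.eq_iff]
  have hsp : ⊤ ≤ Submodule.span ℂ (Set.range v) := by
    have htop : Submodule.span ℂ (Set.range v) = ⊤ := by
      apply Submodule.eq_top_of_finrank_eq
      rw [finrank_span_eq_card hONv.linearIndependent]
      simp [Module.finrank_fin_fun]
    rw [htop]
  set bv : Basis (Fin n) ℂ (Fin n → ℂ) := Basis.mk hONv.linearIndependent hsp with hbvdef
  have hbv : ∀ i, bv i = v i := fun i => by rw [hbvdef, Basis.mk_apply]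
  set g : (Fin n → ℂ) ≃ₗ[ℂ] (Fin n → ℂ) :=
    bv.equiv (Pi.basisFun ℂ (Fin n)) (Equiv.refl _) with hgdef
  have hgv : ∀ i, g (v i) = Pi.single i 1 := by
    intro i
    rw [hgdef, ← hbv i, Basis.equiv_apply]
    simp
  have hgF : ∀ t, g (F t) = Pi.single (e t) 1 := by
    intro t
    have : F t = v (e t) := by rw [hvdef]; simp
    rw [this, hgv]
  have hONv' : ∀ i j, sbilin (v i) (v j) = if i = j then 1 else 0 := hONv
  refine ⟨g, ?_, ?_⟩
  · -- isometry
    have hBB : ((Bn n).compl₁₂ (g : (Fin n → ℂ) →ₗ[ℂ] (Fin n → ℂ))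
        (g : (Fin n → ℂ) →ₗ[ℂ] (Fin n → ℂ))) = Bn n := by
      apply LinearMap.ext_basis bv bv
      intro i j
      simp only [LinearMap.compl₁₂_apply, Bn_apply, LinearEquiv.coe_coe]
      rw [hbv i, hbv j, hgv i, hgv j, sbilin_single, hONv' i j]
    intro x y'
    have h1 := DFunLike.congr_fun (DFunLike.congr_fun hBB x) y'
    simpa using h1
  · -- image of V
    have hkm : k ≤ m := by omega
    have hval1 : ∀ i : Fin k, ((e (Sum.inl (Sum.inl i)) : Fin n) : ℕ) = (i : ℕ) := by
      intro i
      simp [hedef, Equiv.sumCongr_apply, finSumFinEquiv_apply_left]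
    have hval2 : ∀ j : Fin r, ((e (Sum.inl (Sum.inr j)) : Fin n) : ℕ) = k + (j : ℕ) := by
      intro j
      simp [hedef, Equiv.sumCongr_apply, finSumFinEquiv_apply_left, finSumFinEquiv_apply_right]
    have hval3 : ∀ j : Fin r, ((e (Sum.inr (Sum.inl j)) : Fin n) : ℕ) = m + (j : ℕ) := by
      intro j
      simp [hedef, Equiv.sumCongr_apply, finSumFinEquiv_apply_left, finSumFinEquiv_apply_right]
      omega
    have hgu : ∀ i : Fin k, g (u i) = stdVec n ((i : ℕ) + 1) := by
      intro i
      have h1 : u i = F (Sum.inl (Sum.inl i)) := rfl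
      rw [h1, hgF, ← stdVec_single, hval1]
    have hga : ∀ j : Fin r, g (a j) = stdVec n (k + (j : ℕ) + 1) := by
      intro j
      have h1 : a j = F (Sum.inl (Sum.inr j)) := rfl
      rw [h1, hgF, ← stdVec_single, hval2]
    have hgb : ∀ j : Fin r, g (b j) = stdVec n (m + (j : ℕ) + 1) := by
      intro j
      have h1 : b j = F (Sum.inr (Sum.inl j)) := rfl
      rw [h1, hgF, ← stdVec_single, hval3]
    have hgw : ∀ j : Fin r, g (w j)
        = s2⁻¹ • (stdVec n (k + (j : ℕ) + 1) + Complex.I • stdVec n (m + (j : ℕ) + 1)) := by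
      intro j
      have hw' := hwab j
      generalize hga' : a j = A at hw'
      generalize hgb' : b j = B at hw'
      rw [hw', map_add, map_smul, map_smul, ← hga', ← hgb', hga j, hgb j, smul_add, smul_smul]
    rw [← hVy, Submodule.map_span, ← Set.range_comp]
    apply le_antisymm
    · rw [Submodule.span_le]
      rintro x ⟨t, rfl⟩
      cases t with
      | inl i =>
        have him : (i : ℕ) < m := lt_of_lt_of_le i.2 hkm
        have heq : ((g : (Fin n → ℂ) →ₗ[ℂ] (Fin n → ℂ)) ∘ y) (Sum.inl i)
            = (fun t : Fin m => if (t : ℕ) + 1 ≤ k then stdVec n ((t : ℕ) + 1)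
              else stdVec n ((t : ℕ) + 1) + Complex.I • stdVec n ((t : ℕ) + 1 + m - k))
              ⟨(i : ℕ), him⟩ := by
          simp only [Function.comp_apply, hydef, Sum.elim_inl, LinearEquiv.coe_coe]
          rw [hgu i]
          simp only [if_pos (show ((i : ℕ)) + 1 ≤ k by omega)]
        rw [heq]
        exact Submodule.subset_span (Set.mem_range_self _)
      | inr j =>
        have hjm : k + (j : ℕ) < m := by omega
        have heq : ((g : (Fin n → ℂ) →ₗ[ℂ] (Fin n → ℂ)) ∘ y) (Sum.inr j)
            = s2⁻¹ • ((fun t : Fin m => if (t : ℕ) + 1 ≤ k then stdVec n ((t : ℕ) + 1)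
              else stdVec n ((t : ℕ) + 1) + Complex.I • stdVec n ((t : ℕ) + 1 + m - k))
              ⟨k + (j : ℕ), hjm⟩) := by
          simp only [Function.comp_apply, hydef, Sum.elim_inr, LinearEquiv.coe_coe]
          rw [hgw j]
          simp only [if_neg (show ¬ (k + (j : ℕ) + 1 ≤ k) by omega)]
          have e2 : k + (j : ℕ) + 1 + m - k = m + (j : ℕ) + 1 := by omega
          rw [e2]
        rw [heq]
        exact Submodule.smul_mem _ _ (Submodule.subset_span (Set.mem_range_self _))
    · rw [Submodule.span_le]
      rintro x ⟨t, rfl⟩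
      by_cases htk : (t : ℕ) + 1 ≤ k
      · have hik' : (t : ℕ) < k := by omega
        have heq : (fun t : Fin m => if (t : ℕ) + 1 ≤ k then stdVec n ((t : ℕ) + 1)
              else stdVec n ((t : ℕ) + 1) + Complex.I • stdVec n ((t : ℕ) + 1 + m - k)) t
            = ((g : (Fin n → ℂ) →ₗ[ℂ] (Fin n → ℂ)) ∘ y) (Sum.inl ⟨(t : ℕ), hik'⟩) := by
          show (if (t : ℕ) + 1 ≤ k then stdVec n ((t : ℕ) + 1)
              else stdVec n ((t : ℕ) + 1) + Complex.I • stdVec n ((t : ℕ) + 1 + m - k)) = _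
          simp only [Function.comp_apply, hydef, Sum.elim_inl, LinearEquiv.coe_coe]
          rw [hgu, if_pos htk]
        rw [heq]
        exact Submodule.subset_span (Set.mem_range_self _)
      · have hjr : (t : ℕ) - k < r := by omega
        have heq : (fun t : Fin m => if (t : ℕ) + 1 ≤ k then stdVec n ((t : ℕ) + 1)
              else stdVec n ((t : ℕ) + 1) + Complex.I • stdVec n ((t : ℕ) + 1 + m - k)) t
            = s2 • (((g : (Fin n → ℂ) →ₗ[ℂ] (Fin n → ℂ)) ∘ y)
              (Sum.inr ⟨(t : ℕ) - k, hjr⟩)) := by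
          show (if (t : ℕ) + 1 ≤ k then stdVec n ((t : ℕ) + 1)
              else stdVec n ((t : ℕ) + 1) + Complex.I • stdVec n ((t : ℕ) + 1 + m - k)) = _
          simp only [Function.comp_apply, hydef, Sum.elim_inr, LinearEquiv.coe_coe]
          rw [hgw, smul_smul, mul_inv_cancel₀ hs2ne, one_smul, if_neg htk]
          have e1 : k + ((t : ℕ) - k) + 1 = (t : ℕ) + 1 := by omega
          have e2 : m + ((t : ℕ) - k) + 1 = (t : ℕ) + 1 + m - k := by omega
          rw [show ((⟨(t : ℕ) - k, hjr⟩ : Fin r) : ℕ) = (t : ℕ) - k from rfl, e1, e2]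
        rw [heq]
        exact Submodule.smul_mem _ _ (Submodule.subset_span (Set.mem_range_self _))


end
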